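/- Let X be an m × 2n nonnegative matrix with total mass at most 1, viewed as partitioned into n 'active' and n 'inactive' columns, where the target is that each active column sums to 1/n and each inactive column sums to 0. If the total ℓ₁ violation of these column-sum constraints is Δ, then there exists a nonnegative matrix X' with the same total entry sum, satisfying all column-sum constraints exactly, such that the entrywise ℓ₁ distance between X and X' is at most 2Δ. -/

import Mathlib

theorem stmt10 (m n : ℕ) (hn : 0 < n)
    (X : Matrix (Fin m) (Fin n ⊕ Fin n) ℝ)  -- `inl` columns are active, `inr` inactive
    (hX : ∀ i j, 0 ≤ X i j)
    (htotal : ∑ i, ∑ j, X i j = 1)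
    (Δ : ℝ)
    (hΔ : (∑ j : Fin n, |(∑ i, X i (Sum.inl j)) - 1 / n|) +
      (∑ j : Fin n, ∑ i, X i (Sum.inr j)) = Δ) :
    ∃ X' : Matrix (Fin m) (Fin n ⊕ Fin n) ℝ,
      (∀ i j, 0 ≤ X' i j) ∧
      (∑ i, ∑ j, X' i j = ∑ i, ∑ j, X i j) ∧
      (∀ j : Fin n, ∑ i, X' i (Sum.inl j) = 1 / n) ∧
      (∀ j : Fin n, ∑ i, X' i (Sum.inr j) = 0) ∧
      ∑ i, ∑ j, |X i j - X' i j| ≤ 2 * Δ := by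
  have hnR : (0:ℝ) < (n:ℝ) := by exact_mod_cast hn
  have hm : 0 < m := by
    rcases Nat.eq_zero_or_pos m with h | h
    · subst h; simp at htotal
    · exact h
  set i0 : Fin m := ⟨0, hm⟩ with hi0
  set S : Fin n → ℝ := fun j => ∑ i, X i (Sum.inl j) with hS
  have hSnn : ∀ j, 0 ≤ S j := fun j => Finset.sum_nonneg fun i _ => hX i _
  set X' : Matrix (Fin m) (Fin n ⊕ Fin n) ℝ := fun i j =>
    match j with
    | Sum.inl j' => if S j' = 0 then (if i = i0 then (1:ℝ)/n else 0)
        else X i (Sum.inl j') * ((1/n) / S j')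
    | Sum.inr _ => 0 with hX'
  have hnn : ∀ i j, 0 ≤ X' i j := by
    intro i j
    rcases j with j | j
    · simp only [hX']
      by_cases h : S j = 0
      · simp only [h, if_true]
        split
        · positivity
        · exact le_rfl
      · rw [if_neg h]
        exact mul_nonneg (hX i _) (div_nonneg (by positivity) (hSnn j))
    · simp [hX']
  have hcol : ∀ j : Fin n, ∑ i, X' i (Sum.inl j) = 1/n := by
    intro j
    by_cases h : S j = 0
    · simp [hX', h]
    · simp only [hX', if_neg h]
      rw [← Finset.sum_mul]
      rw [show (∑ i, X i (Sum.inl j)) = S j from rfl]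
      field_simp
  have hcolr : ∀ j : Fin n, ∑ i, X' i (Sum.inr j) = 0 := by
    intro j; simp [hX']
  have hdist : ∀ j : Fin n, ∑ i, |X i (Sum.inl j) - X' i (Sum.inl j)| = |S j - 1/n| := by
    intro j
    by_cases h : S j = 0
    · have hz : ∀ i ∈ Finset.univ, X i (Sum.inl j) = 0 :=
        (Finset.sum_eq_zero_iff_of_nonneg (fun i _ => hX i _)).mp h
      have : ∑ i, |X i (Sum.inl j) - X' i (Sum.inl j)| = ∑ i, X' i (Sum.inl j) := by
        apply Finset.sum_congr rfl
        intro i hi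
        rw [hz i hi, zero_sub, abs_neg]
        exact abs_of_nonneg (hnn i (Sum.inl j))
      rw [this, hcol j, h, zero_sub, abs_neg, abs_of_nonneg (by positivity : (0:ℝ) ≤ 1/n)]
    · have hpos : 0 < S j := lt_of_le_of_ne (hSnn j) (Ne.symm h)
      have : ∑ i, |X i (Sum.inl j) - X' i (Sum.inl j)|
          = ∑ i, X i (Sum.inl j) * |1 - (1/n) / S j| := by
        apply Finset.sum_congr rfl
        intro i _
        simp only [hX', if_neg h]
        have e : X i (Sum.inl j) - X i (Sum.inl j) * (1/n / S j)
            = X i (Sum.inl j) * (1 - 1/n / S j) := by ring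
        rw [e, abs_mul, abs_of_nonneg (hX i (Sum.inl j))]
      rw [this, ← Finset.sum_mul]
      rw [show (∑ i, X i (Sum.inl j)) = S j from rfl]
      have e : S j * (1 - 1/n / S j) = S j - 1/n := by field_simp
      rw [← e, abs_mul, abs_of_pos hpos]
  have hΔnn : 0 ≤ Δ := by
    rw [← hΔ]
    have h1 : 0 ≤ ∑ j : Fin n, |(∑ i, X i (Sum.inl j)) - 1 / n| :=
      Finset.sum_nonneg fun j _ => abs_nonneg _
    have h2 : 0 ≤ ∑ j : Fin n, ∑ i, X i (Sum.inr j) :=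
      Finset.sum_nonneg fun j _ => Finset.sum_nonneg fun i _ => hX i _
    linarith
  refine ⟨X', hnn, ?_, hcol, hcolr, ?_⟩
  · rw [htotal, Finset.sum_comm, Fintype.sum_sum_type,
      Finset.sum_congr rfl (fun j _ => hcol j),
      Finset.sum_congr rfl (fun j _ => hcolr j),
      Finset.sum_const, Finset.sum_const, Finset.card_univ]
    simp only [Fintype.card_fin, nsmul_eq_mul, smul_zero, add_zero]
    field_simp
  · rw [Finset.sum_comm, Fintype.sum_sum_type]
    have e1 : ∑ j : Fin n, ∑ i, |X i (Sum.inl j) - X' i (Sum.inl j)|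
        = ∑ j : Fin n, |S j - 1/n| := Finset.sum_congr rfl fun j _ => hdist j
    have e2 : ∑ j : Fin n, ∑ i, |X i (Sum.inr j) - X' i (Sum.inr j)|
        = ∑ j : Fin n, ∑ i, X i (Sum.inr j) := by
      apply Finset.sum_congr rfl
      intro j _
      apply Finset.sum_congr rfl
      intro i _
      simp only [hX', sub_zero]
      exact abs_of_nonneg (hX i _)
    rw [e1, e2]
    have : (∑ j : Fin n, |S j - 1/n|) + ∑ j : Fin n, ∑ i, X i (Sum.inr j) = Δ := hΔ
    linarith
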